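/- arXiv:1607.02738 — 5 statements merged into one kernel-verified Lean document; each statement's English description precedes it below -/
import Mathlib

section
/- Let m be a positive natural number, let A be an invertible antisymmetric m×m real matrix (Aᵀ = -A), and let S : ℝ → Matrix(m,m,ℝ) with S(t) symmetric (S(t)ᵀ = S(t)) for every t. Suppose F : ℝ → Matrix(m,m,ℝ) is differentiable, satisfies the variational equation F'(t) = A · S(t) · F(t) for all t ∈ ℝ, and F(0) = I. Then F(t) is symplectic with respect to A for all t, i.e., F(t)ᵀ · A⁻¹ · F(t) = A⁻¹ for all t ∈ ℝ. -/
open Matrix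

/-- Symplecticity of the Jacobian of a non-canonical Hamiltonian flow: if `A` is invertible
and antisymmetric, `S t` is symmetric for all `t`, and `F` solves the variational equation
`F' = A S F` with `F 0 = 1`, then `F tᵀ A⁻¹ F t = A⁻¹` for all `t`. -/
theorem symplecticity_noncanonical
    (m : ℕ) (hm : 0 < m)
    (A : Matrix (Fin m) (Fin m) ℝ) (hA : Aᵀ = -A) (hAinv : IsUnit A.det)
    (S : ℝ → Matrix (Fin m) (Fin m) ℝ) (hS : ∀ t : ℝ, (S t)ᵀ = S t)
    (F : ℝ → Matrix (Fin m) (Fin m) ℝ)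
    (hF : ∀ (t : ℝ) (i j : Fin m), HasDerivAt (fun s => F s i j) ((A * S t * F t) i j) t)
    (hF0 : F 0 = 1) :
    ∀ t : ℝ, (F t)ᵀ * A⁻¹ * F t = A⁻¹ := by
  -- The matrix identity: the derivative of Fᵀ A⁻¹ F vanishes
  have hzero : ∀ t : ℝ,
      (A * S t * F t)ᵀ * A⁻¹ * F t + (F t)ᵀ * A⁻¹ * (A * S t * F t) = 0 := by
    intro t
    have h1 : (A * S t * F t)ᵀ = (F t)ᵀ * S t * (-A) := by
      rw [transpose_mul, transpose_mul, hS, hA, Matrix.mul_assoc]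
    have hAA : A * A⁻¹ = 1 := mul_nonsing_inv A hAinv
    have hAA' : A⁻¹ * A = 1 := nonsing_inv_mul A hAinv
    rw [h1]
    calc (F t)ᵀ * S t * (-A) * A⁻¹ * F t + (F t)ᵀ * A⁻¹ * (A * S t * F t)
        = -((F t)ᵀ * S t * (A * A⁻¹) * F t) + (F t)ᵀ * (A⁻¹ * A) * (S t * F t) := by
          noncomm_ring
      _ = 0 := by rw [hAA, hAA']; simp [Matrix.mul_assoc]
  -- Entrywise: the function has derivative 0 everywhere
  have hG : ∀ (i j : Fin m) (t : ℝ),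
      HasDerivAt (fun s => ((F s)ᵀ * A⁻¹ * F s) i j) 0 t := by
    intro i j t
    set D := A * S t * F t with hD
    have h1 : HasDerivAt (fun s => ∑ k, ∑ l, F s k i * (A⁻¹ k l * F s l j))
        (∑ k, ∑ l, (D k i * (A⁻¹ k l * F t l j) + F t k i * (A⁻¹ k l * D l j))) t := by
      refine HasDerivAt.fun_sum fun k _ => HasDerivAt.fun_sum fun l _ => ?_
      exact (hF t k i).mul ((hF t l j).const_mul _)
    have hfun : (fun s => ((F s)ᵀ * A⁻¹ * F s) i j)
        = fun s => ∑ k, ∑ l, F s k i * (A⁻¹ k l * F s l j) := by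
      funext s
      simp only [Matrix.mul_apply, transpose_apply, Finset.sum_mul]
      rw [Finset.sum_comm]
      simp [mul_assoc]
    have hval : (∑ k, ∑ l, (D k i * (A⁻¹ k l * F t l j) + F t k i * (A⁻¹ k l * D l j)))
        = (Dᵀ * A⁻¹ * F t + (F t)ᵀ * A⁻¹ * D) i j := by
      simp only [Matrix.add_apply, Matrix.mul_apply, transpose_apply, Finset.sum_mul,
        Finset.sum_add_distrib]
      congr 1
      · rw [Finset.sum_comm]; simp [mul_assoc]
      · rw [Finset.sum_comm]; simp [mul_assoc]
    rw [hfun]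
    have := hzero t
    rw [← hD] at this
    have h0 : (∑ k, ∑ l, (D k i * (A⁻¹ k l * F t l j) + F t k i * (A⁻¹ k l * D l j))) = 0 := by
      rw [hval, this]; simp
    rw [← h0]
    exact h1
  intro t
  ext i j
  have hconst : (fun s => ((F s)ᵀ * A⁻¹ * F s) i j) t
      = (fun s => ((F s)ᵀ * A⁻¹ * F s) i j) 0 := by
    exact is_const_of_deriv_eq_zero (fun s => (hG i j s).differentiableAt)
      (fun s => (hG i j s).deriv) t 0
  simpa [hF0] using hconst
end

section
/- Let m be a positive natural number, let A be an invertible antisymmetric m×m real matrix (Aᵀ = -A), and let S : ℝ → Matrix(m,m,ℝ) with S(t) symmetric for every t. Suppose F : ℝ → Matrix(m,m,ℝ) is differentiable, satisfies F'(t) = A · S(t) · F(t) for all t ∈ ℝ, and F(0) = I. Then the flow is volume-preserving: (det F(t))² = 1 for all t ∈ ℝ. -/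
open Matrix

/-- Volume preservation of the Jacobian of a non-canonical Hamiltonian flow: if `A` is invertible
and antisymmetric, `S t` is symmetric for all `t`, and `F` solves the variational equation
`F' = A S F` with `F 0 = 1`, then `(det F t)² = 1` for all `t`. -/
theorem volume_preservation_noncanonical
    (m : ℕ) (hm : 0 < m)
    (A : Matrix (Fin m) (Fin m) ℝ) (hA : Aᵀ = -A) (hAinv : IsUnit A.det)
    (S : ℝ → Matrix (Fin m) (Fin m) ℝ) (hS : ∀ t : ℝ, (S t)ᵀ = S t)
    (F : ℝ → Matrix (Fin m) (Fin m) ℝ)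
    (hF : ∀ (t : ℝ) (i j : Fin m), HasDerivAt (fun s => F s i j) ((A * S t * F t) i j) t)
    (hF0 : F 0 = 1) :
    ∀ t : ℝ, (F t).det ^ 2 = 1 := by
  have hA1 : A * A⁻¹ = 1 := Matrix.mul_nonsing_inv A hAinv
  have hA2 : A⁻¹ * A = 1 := Matrix.nonsing_inv_mul A hAinv
  have hzero : ∀ u : ℝ,
      (A * S u * F u)ᵀ * A⁻¹ * F u + (F u)ᵀ * A⁻¹ * (A * S u * F u) = 0 := by
    intro u
    have e1 : (A * S u * F u)ᵀ * A⁻¹ * F u = -((F u)ᵀ * S u * F u) := by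
      rw [Matrix.transpose_mul, Matrix.transpose_mul, hA, hS u]
      simp only [Matrix.mul_neg, Matrix.neg_mul, Matrix.mul_assoc]
      rw [← Matrix.mul_assoc A A⁻¹ (F u), hA1, Matrix.one_mul]
    have e2 : (F u)ᵀ * A⁻¹ * (A * S u * F u) = (F u)ᵀ * S u * F u := by
      rw [Matrix.mul_assoc A (S u) (F u), ← Matrix.mul_assoc ((F u)ᵀ * A⁻¹) A (S u * F u),
        Matrix.mul_assoc ((F u)ᵀ) A⁻¹ A, hA2, Matrix.mul_one,
        ← Matrix.mul_assoc ((F u)ᵀ) (S u) (F u)]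
    rw [e1, e2, neg_add_cancel]
  have hm2 : ∀ (M N : Matrix (Fin m) (Fin m) ℝ) (i j : Fin m),
      (Mᵀ * A⁻¹ * N) i j = ∑ l, (∑ k, M k i * A⁻¹ k l) * N l j := by
    intro M N i j
    simp [Matrix.mul_apply, Matrix.transpose_apply]
  have hd : ∀ (t : ℝ) (i j : Fin m),
      HasDerivAt (fun s => ((F s)ᵀ * A⁻¹ * F s) i j) 0 t := by
    intro t i j
    have heq : (fun s => ((F s)ᵀ * A⁻¹ * F s) i j)
        = fun s => ∑ l, (∑ k, F s k i * A⁻¹ k l) * F s l j := by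
      funext s
      exact hm2 (F s) (F s) i j
    rw [heq]
    have hderiv : HasDerivAt (fun s => ∑ l, (∑ k, F s k i * A⁻¹ k l) * F s l j)
        (∑ l, ((∑ k, (A * S t * F t) k i * A⁻¹ k l) * F t l j
          + (∑ k, F t k i * A⁻¹ k l) * (A * S t * F t) l j)) t := by
      apply HasDerivAt.fun_sum
      intro l _
      exact (HasDerivAt.fun_sum fun k _ => (hF t k i).mul_const (A⁻¹ k l)).mul (hF t l j)
    have hval : (∑ l, ((∑ k, (A * S t * F t) k i * A⁻¹ k l) * F t l j
          + (∑ k, F t k i * A⁻¹ k l) * (A * S t * F t) l j)) = 0 := by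
      rw [Finset.sum_add_distrib, ← hm2 (A * S t * F t) (F t) i j,
        ← hm2 (F t) (A * S t * F t) i j, ← Matrix.add_apply, hzero t]
      simp
    rw [hval] at hderiv
    exact hderiv
  have key : ∀ t : ℝ, (F t)ᵀ * A⁻¹ * F t = A⁻¹ := by
    intro t
    have hconst : ∀ i j : Fin m,
        ((F t)ᵀ * A⁻¹ * F t) i j = ((F 0)ᵀ * A⁻¹ * F 0) i j := by
      intro i j
      exact is_const_of_deriv_eq_zero
        (fun x => (hd x i j).differentiableAt)
        (fun x => (hd x i j).deriv) t 0
    have : (F t)ᵀ * A⁻¹ * F t = (F 0)ᵀ * A⁻¹ * F 0 := by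
      ext i j; exact hconst i j
    rw [this, hF0]
    simp
  intro t
  have hdet : (F t).det * (A⁻¹).det * (F t).det = (A⁻¹).det := by
    have := congrArg Matrix.det (key t)
    simpa [Matrix.det_mul, Matrix.det_transpose] using this
  have h2 : (A⁻¹).det * A.det = 1 := by
    rw [← Matrix.det_mul, hA2, Matrix.det_one]
  calc (F t).det ^ 2 = (F t).det ^ 2 * ((A⁻¹).det * A.det) := by rw [h2, mul_one]
    _ = ((F t).det * (A⁻¹).det * (F t).det) * A.det := by ring
    _ = (A⁻¹).det * A.det := by rw [hdet]
    _ = 1 := h2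
end

section
/- Let n be a positive natural number, let E and G be antisymmetric n×n real matrices, let F be any n×n real matrix, and let H : ℝⁿ × ℝⁿ → ℝ be differentiable and even in its second argument, i.e., H(θ, p) = H(θ, -p) for all θ, p. Suppose θ, p : ℝ → ℝⁿ are differentiable and solve the non-canonical dynamics θ'(t) = E·∇_θH(θ(t), p(t)) + F·∇_pH(θ(t), p(t)) and p'(t) = -Fᵀ·∇_θH(θ(t), p(t)) + G·∇_pH(θ(t), p(t)) for all t. Then the time-reversed, momentum-flipped curves θ̃(t) := θ(-t) and p̃(t) := -p(-t) solve the modified non-canonical dynamics θ̃'(t) = -E·∇_θH(θ̃(t), p̃(t)) + F·∇_pH(θ̃(t), p̃(t)) and p̃'(t) = -Fᵀ·∇_θH(θ̃(t), p̃(t)) - G·∇_pH(θ̃(t), p̃(t)) for all t. -/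
open Matrix

/-- Gradient of `H : ℝⁿ × ℝⁿ → ℝ` in its first argument, in the standard basis. -/
noncomputable def gradFst {n : ℕ} (H : (Fin n → ℝ) → (Fin n → ℝ) → ℝ)
    (θ p : Fin n → ℝ) : Fin n → ℝ :=
  fun i => fderiv ℝ (fun θ' => H θ' p) θ (Pi.single i 1)

/-- Gradient of `H : ℝⁿ × ℝⁿ → ℝ` in its second argument, in the standard basis. -/
noncomputable def gradSnd {n : ℕ} (H : (Fin n → ℝ) → (Fin n → ℝ) → ℝ)
    (θ p : Fin n → ℝ) : Fin n → ℝ :=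
  fun i => fderiv ℝ (fun p' => H θ p') p (Pi.single i 1)

lemma gradFst_neg_aux {n : ℕ} (H : (Fin n → ℝ) → (Fin n → ℝ) → ℝ)
    (hHeven : ∀ (θ p : Fin n → ℝ), H θ p = H θ (-p)) (θ p : Fin n → ℝ) :
    gradFst H θ (-p) = gradFst H θ p := by
  have key : (fun θ' => H θ' (-p)) = (fun θ' => H θ' p) :=
    funext fun θ' => (hHeven θ' p).symm
  funext i
  unfold gradFst
  rw [key]

lemma gradSnd_neg_aux {n : ℕ} (H : (Fin n → ℝ) → (Fin n → ℝ) → ℝ)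
    (hH : Differentiable ℝ (fun z : (Fin n → ℝ) × (Fin n → ℝ) => H z.1 z.2))
    (hHeven : ∀ (θ p : Fin n → ℝ), H θ p = H θ (-p)) (θ p : Fin n → ℝ) :
    gradSnd H θ (-p) = -gradSnd H θ p := by
  have hg : Differentiable ℝ (fun p' : Fin n → ℝ => H θ p') := by
    have : Differentiable ℝ (fun p' : Fin n → ℝ => ((θ, p') : (Fin n → ℝ) × (Fin n → ℝ))) :=
      (differentiable_const θ).prodMk differentiable_id
    exact hH.comp this
  have heq : ((fun p' : Fin n → ℝ => H θ p') ∘ Neg.neg) = fun x : Fin n → ℝ => H θ x :=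
    funext fun x => (hHeven θ x).symm
  have hneg : HasFDerivAt (fun x : Fin n → ℝ => -x)
      (-(ContinuousLinearMap.id ℝ (Fin n → ℝ))) (-p) := (hasFDerivAt_id (-p)).neg
  have hf : HasFDerivAt (fun p' : Fin n → ℝ => H θ p')
      (fderiv ℝ (fun p' : Fin n → ℝ => H θ p') p) (-(-p)) := by
    rw [neg_neg]; exact (hg p).hasFDerivAt
  have h1 : HasFDerivAt (fun p' : Fin n → ℝ => H θ p')
      ((fderiv ℝ (fun p' : Fin n → ℝ => H θ p') p).comp
        (-(ContinuousLinearMap.id ℝ (Fin n → ℝ)))) (-p) := by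
    have := hf.comp (-p) hneg
    simpa [heq] using this
  funext i
  unfold gradSnd
  rw [h1.fderiv]
  simp

/-- Pseudo time-reversibility of non-canonical Hamiltonian dynamics: if `(θ, p)` solves the
dynamics with structure matrix `[[E, F], [-Fᵀ, G]]` and `H` is even in the momentum, then
`(θ(-t), -p(-t))` solves the dynamics with structure matrix `[[-E, F], [-Fᵀ, -G]]`. -/
theorem noncanonical_time_reversibility
    (n : ℕ) (hn : 0 < n)
    (E G : Matrix (Fin n) (Fin n) ℝ) (hE : Eᵀ = -E) (hG : Gᵀ = -G)
    (F : Matrix (Fin n) (Fin n) ℝ)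
    (H : (Fin n → ℝ) → (Fin n → ℝ) → ℝ)
    (hH : Differentiable ℝ (fun z : (Fin n → ℝ) × (Fin n → ℝ) => H z.1 z.2))
    (hHeven : ∀ (θ p : Fin n → ℝ), H θ p = H θ (-p))
    (θ p : ℝ → (Fin n → ℝ)) (hθ : Differentiable ℝ θ) (hp : Differentiable ℝ p)
    (hode₁ : ∀ t : ℝ, deriv θ t =
      E.mulVec (gradFst H (θ t) (p t)) + F.mulVec (gradSnd H (θ t) (p t)))
    (hode₂ : ∀ t : ℝ, deriv p t =
      -(Fᵀ.mulVec (gradFst H (θ t) (p t))) + G.mulVec (gradSnd H (θ t) (p t))) :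
    (∀ t : ℝ, deriv (fun s => θ (-s)) t =
      -(E.mulVec (gradFst H (θ (-t)) (-p (-t)))) +
        F.mulVec (gradSnd H (θ (-t)) (-p (-t)))) ∧
    (∀ t : ℝ, deriv (fun s => -p (-s)) t =
      -(Fᵀ.mulVec (gradFst H (θ (-t)) (-p (-t)))) -
        G.mulVec (gradSnd H (θ (-t)) (-p (-t)))) := by
  constructor
  · intro t
    rw [deriv_comp_neg, hode₁, gradFst_neg_aux H hHeven, gradSnd_neg_aux H hH hHeven,
      Matrix.mulVec_neg]
    abel
  · intro t
    have : deriv (fun s => -p (-s)) t = deriv p (-t) := by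
      rw [deriv.fun_neg, deriv_comp_neg, neg_neg]
    rw [this, hode₂, gradFst_neg_aux H hHeven, gradSnd_neg_aux H hH hHeven,
      Matrix.mulVec_neg]
    abel
end

section
/- Let n be a positive natural number, let G be an antisymmetric n×n real matrix with G ≠ 0, and let U : ℝⁿ → ℝ be differentiable. Then there is no twice continuously differentiable function H' : ℝⁿ × ℝⁿ → ℝ such that for all (θ, p) ∈ ℝⁿ × ℝⁿ, ∇_pH'(θ, p) = p and ∇_θH'(θ, p) = ∇U(θ) - G·p. Consequently, the magnetic non-canonical dynamics θ' = p, p' = -∇U(θ) + G·p cannot be realized as canonical Hamiltonian dynamics θ' = ∇_pH', p' = -∇_θH' for any C² Hamiltonian H'. -/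
open Matrix

/-- The gradient of `f : ℝⁿ → ℝ` at `x`, with respect to the standard basis. -/
noncomputable def gradStd {n : ℕ} (f : (Fin n → ℝ) → ℝ) (x : Fin n → ℝ) : Fin n → ℝ :=
  fun i => fderiv ℝ f x (Pi.single i 1)

/-- The magnetic non-canonical dynamics `θ' = p`, `p' = -∇U(θ) + G p` with `G ≠ 0`
antisymmetric cannot be realized as canonical Hamiltonian dynamics: there is no C²
Hamiltonian `H'` with `∇_p H'(θ, p) = p` and `∇_θ H'(θ, p) = ∇U(θ) - G p`. -/
theorem magnetic_dynamics_not_canonical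
    (n : ℕ) (hn : 0 < n)
    (G : Matrix (Fin n) (Fin n) ℝ) (hGanti : Gᵀ = -G) (hG : G ≠ 0)
    (U : (Fin n → ℝ) → ℝ) (hU : Differentiable ℝ U) :
    ¬ ∃ H' : (Fin n → ℝ) → (Fin n → ℝ) → ℝ,
        ContDiff ℝ 2 (fun z : (Fin n → ℝ) × (Fin n → ℝ) => H' z.1 z.2) ∧
        (∀ θ p : Fin n → ℝ, gradStd (fun p' => H' θ p') p = p) ∧
        (∀ θ p : Fin n → ℝ, gradStd (fun θ' => H' θ' p) θ = gradStd U θ - G.mulVec p) := by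
  rintro ⟨H', hf2, h1, h2⟩
  set f : (Fin n → ℝ) × (Fin n → ℝ) → ℝ := fun z => H' z.1 z.2 with hfdef
  have hf_diff : Differentiable ℝ f := hf2.differentiable (by norm_num)
  set φ : (Fin n → ℝ) × (Fin n → ℝ) →
      ((Fin n → ℝ) × (Fin n → ℝ)) →L[ℝ] ℝ := fderiv ℝ f with hφdef
  have hφ_diff : Differentiable ℝ φ :=
    (hf2.fderiv_right (m := 1) (by norm_num)).differentiable (by norm_num)
  -- Step A : φ z (0, e i) = z.2 i
  have stepA : ∀ (z : (Fin n → ℝ) × (Fin n → ℝ)) (i : Fin n),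
      φ z (0, Pi.single i 1) = z.2 i := by
    intro z i
    have hι : HasFDerivAt (fun p : Fin n → ℝ => ((z.1, p) : (Fin n → ℝ) × (Fin n → ℝ)))
        (ContinuousLinearMap.inr ℝ (Fin n → ℝ) (Fin n → ℝ)) z.2 :=
      hasFDerivAt_prodMk_right z.1 z.2
    have hc : HasFDerivAt (fun p : Fin n → ℝ => H' z.1 p)
        ((φ z).comp (ContinuousLinearMap.inr ℝ (Fin n → ℝ) (Fin n → ℝ))) z.2 :=
      ((hf_diff (z.1, z.2)).hasFDerivAt).comp z.2 hι
    have := congrFun (h1 z.1 z.2) i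
    rw [gradStd, hc.fderiv] at this
    simpa using this
  -- Step B : φ z (e j, 0) = ∇U(z.1) j - (G z.2) j
  have stepB : ∀ (z : (Fin n → ℝ) × (Fin n → ℝ)) (j : Fin n),
      φ z (Pi.single j 1, 0) = gradStd U z.1 j - G.mulVec z.2 j := by
    intro z j
    have hι : HasFDerivAt (fun θ : Fin n → ℝ => ((θ, z.2) : (Fin n → ℝ) × (Fin n → ℝ)))
        (ContinuousLinearMap.inl ℝ (Fin n → ℝ) (Fin n → ℝ)) z.1 :=
      hasFDerivAt_prodMk_left z.1 z.2
    have hc : HasFDerivAt (fun θ : Fin n → ℝ => H' θ z.2)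
        ((φ z).comp (ContinuousLinearMap.inl ℝ (Fin n → ℝ) (Fin n → ℝ))) z.1 :=
      by have := ((hf_diff (z.1, z.2)).hasFDerivAt).comp z.1 hι; exact this
    have := congrFun (h2 z.1 z.2) j
    rw [gradStd, hc.fderiv] at this
    simpa [Pi.sub_apply] using this
  set z₀ : (Fin n → ℝ) × (Fin n → ℝ) := (0, 0) with hz₀
  set f'' := fderiv ℝ φ z₀ with hf''
  have hφ0 : HasFDerivAt φ f'' z₀ := (hφ_diff z₀).hasFDerivAt
  have hsymm : ∀ v w, f'' v w = f'' w v :=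
    second_derivative_symmetric (fun y => (hf_diff y).hasFDerivAt) hφ0
  -- Step C : f'' (e j, 0) (0, e i) = 0
  have stepC : ∀ i j : Fin n, f'' (Pi.single j 1, 0) (0, Pi.single i 1) = 0 := by
    intro i j
    set v : (Fin n → ℝ) × (Fin n → ℝ) := (0, Pi.single i 1) with hv
    have hg : HasFDerivAt (fun z => φ z v)
        ((φ z₀).comp 0 + f''.flip v) z₀ :=
      hφ0.clm_apply (hasFDerivAt_const v z₀)
    have hgeq : (fun z : (Fin n → ℝ) × (Fin n → ℝ) => φ z v)
        = fun z => z.2 i := by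
      funext z; exact stepA z i
    set M : ((Fin n → ℝ) × (Fin n → ℝ)) →L[ℝ] ℝ :=
      (ContinuousLinearMap.proj (R := ℝ) (φ := fun _ : Fin n => ℝ) i).comp (ContinuousLinearMap.snd ℝ (Fin n → ℝ) (Fin n → ℝ))
    have hg2 : HasFDerivAt (fun z : (Fin n → ℝ) × (Fin n → ℝ) => z.2 i) M z₀ :=
      M.hasFDerivAt
    rw [hgeq] at hg
    have heq := hg.unique hg2
    have := congrFun (congrArg DFunLike.coe heq) (Pi.single j 1, 0)
    simp only [ContinuousLinearMap.add_apply, ContinuousLinearMap.comp_apply,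
      ContinuousLinearMap.zero_apply, ContinuousLinearMap.flip_apply, M,
      ContinuousLinearMap.coe_snd', ContinuousLinearMap.proj_apply, map_zero] at this
    simpa using this
  -- Step D : f'' (0, e i) (e j, 0) = - G j i
  have stepD : ∀ i j : Fin n, f'' (0, Pi.single i 1) (Pi.single j 1, 0) = -(G j i) := by
    intro i j
    set w : (Fin n → ℝ) × (Fin n → ℝ) := (Pi.single j 1, 0) with hw
    have hh : HasFDerivAt (fun z => φ z w)
        ((φ z₀).comp 0 + f''.flip w) z₀ :=
      hφ0.clm_apply (hasFDerivAt_const w z₀)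
    have hι : HasFDerivAt (fun p : Fin n → ℝ => ((0, p) : (Fin n → ℝ) × (Fin n → ℝ)))
        (ContinuousLinearMap.inr ℝ (Fin n → ℝ) (Fin n → ℝ)) 0 :=
      hasFDerivAt_prodMk_right 0 0
    have hcomp : HasFDerivAt (fun p : Fin n → ℝ => φ (0, p) w)
        (((φ z₀).comp 0 + f''.flip w).comp
          (ContinuousLinearMap.inr ℝ (Fin n → ℝ) (Fin n → ℝ))) 0 :=
      hh.comp 0 hι
    -- the same function computed explicitly
    set L : (Fin n → ℝ) →L[ℝ] (Fin n → ℝ) := (Matrix.mulVecLin G).toContinuousLinearMap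
    set M : (Fin n → ℝ) →L[ℝ] ℝ := (ContinuousLinearMap.proj (R := ℝ) (φ := fun _ : Fin n => ℝ) j).comp L
    have hkeq : (fun p : Fin n → ℝ => φ (0, p) w)
        = fun p => gradStd U 0 j - M p := by
      funext p
      have := stepB (0, p) j
      simpa [M, L] using this
    have hk2 : HasFDerivAt (fun p : Fin n → ℝ => gradStd U 0 j - M p)
        (0 - M) 0 :=
      (hasFDerivAt_const (gradStd U 0 j) 0).sub M.hasFDerivAt
    rw [hkeq] at hcomp
    have heq := hcomp.unique hk2
    have := congrFun (congrArg DFunLike.coe heq) (Pi.single i 1)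
    simp only [ContinuousLinearMap.comp_apply, ContinuousLinearMap.add_apply,
      ContinuousLinearMap.inr_apply, ContinuousLinearMap.zero_apply,
      ContinuousLinearMap.flip_apply, ContinuousLinearMap.sub_apply, map_zero,
      ContinuousLinearMap.proj_apply, M, L,
      LinearMap.coe_toContinuousLinearMap', Matrix.mulVecLin_apply] at this
    have hmv : G.mulVec (Pi.single i 1) j = G j i := by
      simp [Matrix.mulVec_single]
    rw [hmv] at this
    simpa using this
  -- conclude
  apply hG
  ext j i
  have := (stepD i j).symm.trans (hsymm (0, Pi.single i 1) (Pi.single j 1, 0))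
  rw [stepC i j] at this
  have : G j i = 0 := by linarith
  simpa using this
end

section
/- Let n be a positive natural number, let G be an invertible antisymmetric n×n real matrix, and let ε ∈ ℝ. Set K := G⁻¹·(exp(εG) - I) and consider the 2n×2n block matrix J₂ = [[I, K], [0, exp(εG)]] (the Jacobian of the exact momentum sub-flow (θ, p) ↦ (θ + K·p, exp(εG)·p) of magnetic HMC). Then J₂ is symplectic with respect to the structure matrix A = [[0, I], [-I, G]], whose inverse is A⁻¹ = [[G, -I], [I, 0]]: that is, J₂ᵀ · A⁻¹ · J₂ = A⁻¹. -/
open Matrix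

/-- The Jacobian `J₂ = [[I, G⁻¹(exp(εG) - I)], [0, exp(εG)]]` of the exact momentum
sub-flow of magnetic HMC is symplectic with respect to the structure matrix
`A = [[0, I], [-I, G]]`, whose inverse is `[[G, -I], [I, 0]]`. -/
theorem magnetic_momentum_subflow_symplectic
    (n : ℕ) (hn : 0 < n)
    (G : Matrix (Fin n) (Fin n) ℝ) (hGanti : Gᵀ = -G) (hG : IsUnit G.det)
    (ε : ℝ)
    (K : Matrix (Fin n) (Fin n) ℝ) (hK : K = G⁻¹ * (NormedSpace.exp (ε • G) - 1))
    (J₂ : Matrix (Fin n ⊕ Fin n) (Fin n ⊕ Fin n) ℝ)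
    (hJ₂ : J₂ = Matrix.fromBlocks 1 K 0 (NormedSpace.exp (ε • G)))
    (A : Matrix (Fin n ⊕ Fin n) (Fin n ⊕ Fin n) ℝ)
    (hA : A = Matrix.fromBlocks 0 1 (-1) G) :
    A⁻¹ = Matrix.fromBlocks G (-1) 1 0 ∧ J₂ᵀ * A⁻¹ * J₂ = A⁻¹ := by
  set E := NormedSpace.exp (ε • G) with hE
  have hEt : Eᵀ = NormedSpace.exp (-(ε • G)) := by
    rw [hE, ← Matrix.exp_transpose, transpose_smul, hGanti, smul_neg]
  have hEtE : Eᵀ * E = 1 := by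
    rw [hEt, hE, ← Matrix.exp_add_of_commute (-(ε • G)) (ε • G) (Commute.neg_left rfl)]
    simp [NormedSpace.exp_zero]
  have hGE : G * E = E * G := by
    have : Commute G (ε • G) := (Commute.refl G).smul_right ε
    exact (this.exp_right)
  have hGinvE : G⁻¹ * E = E * G⁻¹ := by
    have h2 : G⁻¹ * (G * E) * G⁻¹ = G⁻¹ * (E * G) * G⁻¹ := by rw [hGE]
    rw [← mul_assoc, Matrix.nonsing_inv_mul G hG, one_mul, mul_assoc, mul_assoc,
      Matrix.mul_nonsing_inv G hG, mul_one] at h2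
    exact h2.symm
  have hAinv : A⁻¹ = Matrix.fromBlocks G (-1) 1 0 := by
    apply Matrix.inv_eq_right_inv
    rw [hA, Matrix.fromBlocks_multiply]
    simp [Matrix.fromBlocks_one]
  refine ⟨hAinv, ?_⟩
  have hGK : G * K = E - 1 := by
    rw [hK, ← mul_assoc, Matrix.mul_nonsing_inv G hG, one_mul]
  have hKt : Kᵀ = (Eᵀ - 1) * (-G⁻¹) := by
    rw [hK, transpose_mul, transpose_nonsing_inv, hGanti, transpose_sub, transpose_one]
    congr 1
    exact Matrix.inv_eq_right_inv (by
      rw [Matrix.neg_mul, Matrix.mul_neg, neg_neg, Matrix.mul_nonsing_inv G hG])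
  have hKtG : Kᵀ * G = 1 - Eᵀ := by
    rw [hKt, mul_assoc, Matrix.neg_mul, Matrix.nonsing_inv_mul G hG, Matrix.mul_neg, mul_one,
      neg_sub]
  have hKalt : K = (E - 1) * G⁻¹ := by
    rw [hK, Matrix.mul_sub, mul_one, hGinvE, Matrix.sub_mul, one_mul]
  have hKtE : Kᵀ * E = K := by
    rw [hKt, Matrix.mul_neg, Matrix.neg_mul, mul_assoc, hGinvE, ← mul_assoc, Matrix.sub_mul,
      hEtE, one_mul, ← Matrix.neg_mul, neg_sub]
    exact hKalt.symm
  rw [hAinv, hJ₂, Matrix.fromBlocks_transpose, Matrix.fromBlocks_multiply,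
    Matrix.fromBlocks_multiply, Matrix.fromBlocks_inj]
  refine ⟨?_, ?_, ?_, ?_⟩
  · simp
  · simp only [Matrix.one_mul, Matrix.mul_one, Matrix.zero_mul, Matrix.mul_zero,
      Matrix.neg_mul, Matrix.mul_neg, add_zero, zero_add, one_mul, Matrix.transpose_one, Matrix.transpose_zero]
    rw [hGK]; abel
  · simp only [Matrix.one_mul, Matrix.mul_one, Matrix.zero_mul, Matrix.mul_zero,
      Matrix.neg_mul, Matrix.mul_neg, add_zero, zero_add, one_mul, Matrix.transpose_one, Matrix.transpose_zero]
    rw [hKtG]; abel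
  · simp only [Matrix.one_mul, Matrix.mul_one, Matrix.zero_mul, Matrix.mul_zero,
      Matrix.neg_mul, Matrix.mul_neg, add_zero, zero_add, one_mul, Matrix.transpose_one, Matrix.transpose_zero]
    rw [Matrix.add_mul, hKtG, hKtE, Matrix.sub_mul, one_mul]
    abel
end
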